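/- Let g ≥ 6 and let ε be a real number with 0 < ε ≤ (3γ − 2 − 1/g)/(1 + 3γ). Then any numerical semigroup S of genus g satisfying (γ − ε)·g < m(S) < (γ + ε)·g and (2 − ε)·γ·g < F(S) < (2 + ε)·γ·g has two consecutive elements among its left elements, i.e., there exists x ∈ ℕ with x ∈ S, x + 1 ∈ S and x + 1 < F(S). -/
import Mathlib


/-- A numerical semigroup: an additive submonoid of ℕ with finite complement. -/
structure NumericalSemigroup where
  carrier : Set ℕ
  zero_mem : 0 ∈ carrier
  add_mem : ∀ ⦃a b : ℕ⦄, a ∈ carrier → b ∈ carrier → a + b ∈ carrier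
  cofinite : (carrierᶜ : Set ℕ).Finite

namespace NumericalSemigroup

/-- The genus: the number of gaps. -/
noncomputable def genus (S : NumericalSemigroup) : ℕ := S.carrierᶜ.ncard

/-- The multiplicity: the smallest nonzero element. -/
noncomputable def multiplicity (S : NumericalSemigroup) : ℕ :=
  sInf {n : ℕ | n ∈ S.carrier ∧ n ≠ 0}

/-- The Frobenius number: the largest gap. -/
noncomputable def frobenius (S : NumericalSemigroup) : ℕ := sSup S.carrierᶜ

/-- The left elements: the elements of `S` smaller than the Frobenius number. -/
def leftElements (S : NumericalSemigroup) : Set ℕ :=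
  {s : ℕ | s ∈ S.carrier ∧ s < S.frobenius}

end NumericalSemigroup

/-- The gcd of a set of natural numbers: the common divisor that is divisible by
every common divisor (so `setGcd ∅ = 0`). -/
noncomputable def setGcd (A : Set ℕ) : ℕ :=
  sInf {d : ℕ | (∀ a ∈ A, d ∣ a) ∧ ∀ e : ℕ, (∀ a ∈ A, e ∣ a) → e ∣ d}

/-- The constant γ = (5 + √5)/10. -/
noncomputable def gamma : ℝ := (5 + Real.sqrt 5) / 10

/-- `S` belongs to an infinite chain in the semigroup tree. -/
def InInfiniteChain (S : NumericalSemigroup) : Prop :=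
  ∃ f : ℕ → NumericalSemigroup, f 0 = S ∧
    ∀ i : ℕ, (f (i + 1)).carrier ≠ Set.univ ∧
      (f i).carrier = (f (i + 1)).carrier ∪ {(f (i + 1)).frobenius}

theorem exists_consecutive_elements (g : ℕ) (hg : 6 ≤ g) (ε : ℝ) (hε : 0 < ε)
    (hε' : ε ≤ (3 * gamma - 2 - 1 / (g : ℝ)) / (1 + 3 * gamma))
    (S : NumericalSemigroup) (hgen : S.genus = g)
    (hm : (gamma - ε) * g < (S.multiplicity : ℝ) ∧ (S.multiplicity : ℝ) < (gamma + ε) * g)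
    (hF : (2 - ε) * gamma * g < (S.frobenius : ℝ) ∧ (S.frobenius : ℝ) < (2 + ε) * gamma * g) :
    ∃ x : ℕ, x ∈ S.carrier ∧ x + 1 ∈ S.carrier ∧ x + 1 < S.frobenius := by
  classical
  by_contra hcon
  push_neg at hcon
  -- basic real facts about gamma
  have h5 : Real.sqrt 5 ^ 2 = 5 := Real.sq_sqrt (by norm_num)
  have h5p : (0:ℝ) ≤ Real.sqrt 5 := Real.sqrt_nonneg 5
  have hγ : gamma = (5 + Real.sqrt 5) / 10 := rfl
  have hγpos : (0:ℝ) < gamma := by rw [hγ]; positivity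
  have hγ1 : gamma ≤ 1 := by rw [hγ]; nlinarith [h5, h5p]
  have hgpos : (0:ℝ) < (g:ℝ) := by
    have : (6:ℝ) ≤ (g:ℝ) := by exact_mod_cast hg
    linarith
  have h13 : (0:ℝ) < 1 + 3 * gamma := by linarith
  have h1 : ε * (1 + 3 * gamma) ≤ 3 * gamma - 2 - 1 / g := (le_div_iff₀ h13).mp hε'
  have hinvg : (1 / (g:ℝ)) * g = 1 := by field_simp
  have h2 : ε * (1 + 3 * gamma) * g ≤ (3 * gamma - 2) * g - 1 := by
    have := mul_le_mul_of_nonneg_right h1 hgpos.le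
    nlinarith [hinvg]
  -- complement facts
  have hC : S.carrierᶜ.Finite := S.cofinite
  have hCne : S.carrierᶜ.Nonempty := by
    rw [Set.nonempty_iff_ne_empty]
    intro h
    have : S.genus = 0 := by rw [NumericalSemigroup.genus, h, Set.ncard_empty]
    omega
  have hFmem : S.frobenius ∈ S.carrierᶜ := hCne.csSup_mem hC
  have hFub : ∀ c ∈ S.carrierᶜ, c ≤ S.frobenius := fun c hc => le_csSup hC.bddAbove hc
  have hF0 : S.frobenius ∉ S.carrier := hFmem
  -- multiplicity facts
  have hMsetne : {n : ℕ | n ∈ S.carrier ∧ n ≠ 0}.Nonempty := by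
    have hinf : S.carrier.Infinite := by
      have := hC.infinite_compl
      rwa [compl_compl] at this
    obtain ⟨n, hn⟩ := (hinf.diff (Set.finite_singleton 0)).nonempty
    exact ⟨n, hn.1, by simpa using hn.2⟩
  have hMmem : S.multiplicity ∈ S.carrier ∧ S.multiplicity ≠ 0 := Nat.sInf_mem hMsetne
  have hMle : ∀ x, x ∈ S.carrier → x ≠ 0 → S.multiplicity ≤ x :=
    fun x hx hx0 => Nat.sInf_le ⟨hx, hx0⟩
  set F := S.frobenius with hFdef
  set M := S.multiplicity with hMdef
  -- M < F from the real bounds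
  have hεγ : ε * (1 + gamma) ≤ 3 * gamma - 2 := by
    have : (0:ℝ) < 1 / g := by positivity
    nlinarith [mul_nonneg hε.le hγpos.le]
  have hMF : M < F := by
    have hkey : (0:ℝ) ≤ gamma - ε * (1 + gamma) := by nlinarith
    have h3 : ((M:ℝ)) < (F:ℝ) := by
      have := mul_nonneg hgpos.le hkey
      nlinarith [hm.2, hF.1]
    exact_mod_cast h3
  -- counting
  set A : Finset ℕ := (Finset.range (F+1)).filter (fun x => x ∈ S.carrier ∧ x ≠ 0) with hA
  have hAprop : ∀ x ∈ A, x ∈ S.carrier ∧ x ≠ 0 ∧ x < F := by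
    intro x hx
    rw [hA, Finset.mem_filter, Finset.mem_range] at hx
    refine ⟨hx.2.1, hx.2.2, ?_⟩
    rcases lt_or_eq_of_le (Nat.lt_succ_iff.mp hx.1) with h | h
    · exact h
    · exact absurd (h ▸ hx.2.1) hF0
  have hsplit := Finset.card_filter_add_card_filter_not
    (s := Finset.range (F+1)) (p := fun x => x ∈ S.carrier)
  have hgaps : (Finset.range (F+1)).filter (fun x => ¬ x ∈ S.carrier) = hC.toFinset := by
    ext x
    simp only [Finset.mem_filter, Finset.mem_range, Set.Finite.mem_toFinset, Set.mem_compl_iff]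
    constructor
    · exact fun h => h.2
    · exact fun h => ⟨Nat.lt_succ_of_le (hFub x h), h⟩
  have hgcard : hC.toFinset.card = g := by
    rw [← hgen, NumericalSemigroup.genus, Set.ncard_eq_toFinset_card _ hC]
  have hins : (Finset.range (F+1)).filter (fun x => x ∈ S.carrier) = insert 0 A := by
    ext x
    rw [Finset.mem_insert, hA, Finset.mem_filter, Finset.mem_range, Finset.mem_filter,
      Finset.mem_range]
    constructor
    · intro h
      by_cases h0 : x = 0
      · exact Or.inl h0
      · exact Or.inr ⟨h.1, h.2, h0⟩
    · rintro (rfl | h)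
      · exact ⟨Nat.succ_pos _, S.zero_mem⟩
      · exact ⟨h.1, h.2.1⟩
  have h0A : 0 ∉ A := by
    intro h
    exact (hAprop 0 h).2.1 rfl
  have hAcard : A.card + g = F := by
    rw [hins, hgaps, hgcard, Finset.card_insert_of_notMem h0A, Finset.card_range] at hsplit
    omega
  set B : Finset ℕ := A.image (· + 1) with hB
  have hBcard : B.card = A.card := Finset.card_image_of_injective _ (add_left_injective 1)
  have hdisj : Disjoint A B := by
    rw [Finset.disjoint_left]
    intro y hyA hyB
    obtain ⟨x, hxA, rfl⟩ := Finset.mem_image.mp hyB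
    have hx := hAprop x hxA
    have hy := hAprop _ hyA
    exact absurd hy.2.2 (not_lt_of_ge (hcon x hx.1 hy.1))
  have hsub : A ∪ B ⊆ Finset.Icc M F := by
    intro y hy
    rw [Finset.mem_Icc]
    rcases Finset.mem_union.mp hy with h | h
    · have := hAprop y h
      exact ⟨hMle y this.1 this.2.1, this.2.2.le⟩
    · obtain ⟨x, hxA, rfl⟩ := Finset.mem_image.mp h
      have := hAprop x hxA
      exact ⟨le_trans (hMle x this.1 this.2.1) (Nat.le_succ x), this.2.2⟩
  have hcount : 2 * A.card ≤ F + 1 - M := by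
    have h4 : (A ∪ B).card ≤ (Finset.Icc M F).card := Finset.card_le_card hsub
    rw [Finset.card_union_of_disjoint hdisj, hBcard, Nat.card_Icc] at h4
    omega
  have hnat : F + M ≤ 2 * g + 1 := by omega
  -- final contradiction
  have hcast : (F:ℝ) + (M:ℝ) ≤ 2 * g + 1 := by exact_mod_cast hnat
  nlinarith [hF.1, hm.1, h2, mul_nonneg (mul_nonneg hε.le hγpos.le) hgpos.le]
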